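/- Let n be a positive integer, C = S^s with gcd(s,n) = 1, and D a diagonal matrix with unit-modulus entries a_0,…,a_{n−1}. Let α = a_0 a_1 ⋯ a_{n−1} and let λ_0 be any n-th root of α. Then for each j ∈ {0,…,n−1}, the vector x_j with coordinates (x_j)_{sk mod n} = (ω^{jk}/√n) · λ_0^k / ∏_{l=0}^{k−1} a_{sl} is an eigenvector of DC with eigenvalue ω^j λ_0, where ω = e^{2πi/n}. -/

import Mathlib

open Matrix

/-- `ω n = e^{2πi/n}`. -/
noncomputable def omg (n : ℕ) : ℂ := Complex.exp (2 * Real.pi * Complex.I / n)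

/-- The cyclic shift matrix: `S_{i,j} = 1` iff `i + 1 = j` in `ZMod n`. -/
noncomputable def Smat (n : ℕ) : Matrix (ZMod n) (ZMod n) ℂ :=
  Matrix.of fun i j => if i + 1 = j then 1 else 0

/-- The diagonal matrix `R` with `R_{j,j} = ω^j`. -/
noncomputable def Rmat (n : ℕ) : Matrix (ZMod n) (ZMod n) ℂ :=
  Matrix.diagonal fun j => omg n ^ (j.val)

lemma smat_mulVec (n : ℕ) [NeZero n] (x : ZMod n → ℂ) :
    (Smat n).mulVec x = fun i => x (i + 1) := by
  funext i
  simp only [Smat, mulVec, dotProduct, of_apply, ite_mul, one_mul, zero_mul]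
  rw [Finset.sum_ite_eq]
  simp

lemma smat_pow_mulVec (n : ℕ) [NeZero n] (s : ℕ) (x : ZMod n → ℂ) :
    (Smat n ^ s).mulVec x = fun i => x (i + s) := by
  induction s generalizing x with
  | zero => simp [Matrix.one_mulVec]
  | succ t ih =>
    rw [pow_succ, ← Matrix.mulVec_mulVec, smat_mulVec, ih]
    funext i
    push_cast
    ring_nf

lemma prod_range_zmod (n : ℕ) [NeZero n] (f : ZMod n → ℂ) :
    ∏ l ∈ Finset.range n, f l = ∏ x : ZMod n, f x := by
  refine Finset.prod_nbij' (fun l => ((l : ZMod n))) (fun x => x.val) ?_ ?_ ?_ ?_ ?_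
  · simp
  · simp [ZMod.val_lt]
  · intro l hl; simp at hl; simp [ZMod.val_cast_of_lt hl]
  · intro x _; simp [ZMod.natCast_zmod_val]
  · simp

lemma omg_pow_n (n : ℕ) [NeZero n] : omg n ^ n = 1 := by
  rw [omg, ← Complex.exp_nat_mul, mul_div_cancel₀, Complex.exp_two_pi_mul_I]
  exact_mod_cast Nat.cast_ne_zero.mpr (NeZero.ne n)

theorem stmt7 (n : ℕ) [NeZero n] (s : ℕ) (hs : Nat.Coprime s n)
    (a : ZMod n → ℂ) (ha : ∀ i, ‖a i‖ = 1)
    (lam0 : ℂ) (hlam : lam0 ^ n = ∏ i, a i) (j : ZMod n) :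
    (Matrix.diagonal a * Smat n ^ s).mulVec
        (fun i : ZMod n =>
          let k : ℕ := (((s : ZMod n))⁻¹ * i).val
          omg n ^ (j.val * k) / Real.sqrt n * lam0 ^ k /
            ∏ l ∈ Finset.range k, a ((s : ZMod n) * l)) =
      (omg n ^ j.val * lam0) •
        (fun i : ZMod n =>
          let k : ℕ := (((s : ZMod n))⁻¹ * i).val
          omg n ^ (j.val * k) / Real.sqrt n * lam0 ^ k /
            ∏ l ∈ Finset.range k, a ((s : ZMod n) * l)) := by
  have ha' : ∀ i, a i ≠ 0 := fun i h => by simpa [h] using ha i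
  have hsqrt : (Real.sqrt n : ℂ) ≠ 0 := by
    simp only [ne_eq, Complex.ofReal_eq_zero]
    exact Real.sqrt_ne_zero'.mpr (by exact_mod_cast Nat.pos_of_ne_zero (NeZero.ne n))
  have hinv : (s : ZMod n) * (s : ZMod n)⁻¹ = 1 := ZMod.coe_mul_inv_eq_one s hs
  rw [← Matrix.mulVec_mulVec, smat_pow_mulVec]
  funext i
  rw [Matrix.mulVec_diagonal]
  simp only [Pi.smul_apply, smul_eq_mul]
  set m : ZMod n := (s : ZMod n)⁻¹ * i with hm
  have h1 : (s : ZMod n)⁻¹ * (i + s) = m + 1 := by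
    rw [mul_add, mul_comm ((s : ZMod n))⁻¹ (s : ZMod n), hinv]
  rw [h1]
  set k : ℕ := m.val with hk
  have hi : (s : ZMod n) * (k : ZMod n) = i := by
    rw [hk, ZMod.natCast_zmod_val, hm, ← mul_assoc, hinv, one_mul]
  have hklt : k < n := ZMod.val_lt m
  have hPne : ∀ t : ℕ, (∏ l ∈ Finset.range t, a ((s : ZMod n) * l)) ≠ 0 :=
    fun t => Finset.prod_ne_zero_iff.mpr fun l _ => ha' _
  have hmk : m = (k : ZMod n) := (ZMod.natCast_zmod_val m).symm
  by_cases hc : k + 1 < n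
  · have hval : (m + 1).val = k + 1 := by
      rw [hmk]
      rw [show ((k : ZMod n) + 1) = ((k + 1 : ℕ) : ZMod n) by push_cast; ring]
      exact ZMod.val_cast_of_lt hc
    rw [hval, Finset.prod_range_succ, hi]
    rw [mul_add, mul_one, pow_add, pow_succ]
    have hai := ha' i
    rw [div_mul_eq_div_div, ← mul_div_assoc, mul_div_cancel_left₀ _ hai]
    field_simp
  · have hn : k + 1 = n := by omega
    have hval : (m + 1).val = 0 := by
      rw [hmk]
      rw [show ((k : ZMod n) + 1) = ((k + 1 : ℕ) : ZMod n) by push_cast; ring, hn]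
      simp
    rw [hval]
    simp only [Nat.mul_zero, pow_zero, Finset.range_zero, Finset.prod_empty, div_one, one_div]
    -- key identities
    have hpow1 : omg n ^ j.val * omg n ^ (j.val * k) = 1 := by
      rw [← pow_add]
      have h2 : j.val + j.val * k = j.val * (k + 1) := by ring
      rw [h2, hn, mul_comm, pow_mul, omg_pow_n, one_pow]
    have hpow2 : lam0 * lam0 ^ k = ∏ x, a x := by
      rw [← pow_succ', hn, hlam]
    have hP : (∏ l ∈ Finset.range k, a ((s : ZMod n) * l)) * a i = ∏ x, a x := by
      rw [← hi, ← Finset.prod_range_succ, hn]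
      rw [prod_range_zmod n (fun z => a ((s : ZMod n) * z))]
      have hu := (ZMod.unitOfCoprime s hs).mulLeft_bijective
      have : ((ZMod.unitOfCoprime s hs : (ZMod n)ˣ) : ZMod n) = (s : ZMod n) := rfl
      rw [this] at hu
      exact Fintype.prod_bijective _ hu _ _ fun x => rfl
    have hPk := hPne k
    field_simp
    linear_combination hP - (lam0 * lam0 ^ k) * hpow1 - hpow2
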